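/- Let d be a divisor of n with 1 < d < n. If n divides d², then Ω_d is a clique in the zero-divisor graph Γ(Z_n); if n does not divide d², then Ω_d is an independent set in Γ(Z_n). -/

import Mathlib

/-- The nonzero zero-divisors of `ZMod n`, the vertex set of the zero-divisor graph. -/
abbrev Zdv (n : ℕ) : Type := {x : ZMod n // x ≠ 0 ∧ ∃ y : ZMod n, y ≠ 0 ∧ x * y = 0}

/-- The zero-divisor graph of `ZMod n`: distinct nonzero zero-divisors `x, y` adjacent iff `x*y = 0`. -/
def zdg (n : ℕ) : SimpleGraph (Zdv n) :=
  SimpleGraph.fromRel (fun x y => x.1 * y.1 = 0)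

theorem omega_clique_or_indep (n d : ℕ) (hdn : d ∣ n) (h1 : 1 < d) (h2 : d < n) :
    (n ∣ d ^ 2 → (zdg n).IsClique {x : Zdv n | Nat.gcd x.1.val n = d}) ∧
    (¬ n ∣ d ^ 2 → ∀ x ∈ {x : Zdv n | Nat.gcd x.1.val n = d},
      ∀ y ∈ {x : Zdv n | Nat.gcd x.1.val n = d}, ¬ (zdg n).Adj x y) := by
  have hd0 : 0 < d := lt_trans Nat.zero_lt_one h1
  have hn : 0 < n := lt_trans hd0 h2
  haveI : NeZero n := ⟨hn.ne'⟩
  have key : ∀ a b : ZMod n, a * b = 0 ↔ n ∣ a.val * b.val := by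
    intro a b
    rw [← ZMod.val_eq_zero, ZMod.val_mul, Nat.dvd_iff_mod_eq_zero]
  constructor
  · intro hd2 x hx y hy hxy
    simp only [Set.mem_setOf_eq] at hx hy
    refine ⟨hxy, Or.inl ?_⟩
    show (x : ZMod n) * y = 0
    rw [key]
    refine hd2.trans ?_
    rw [pow_two]
    exact Nat.mul_dvd_mul (hx ▸ Nat.gcd_dvd_left _ _) (hy ▸ Nat.gcd_dvd_left _ _)
  · intro hd2 x hx y hy hadj
    simp only [Set.mem_setOf_eq] at hx hy
    obtain ⟨hne, hmul⟩ := hadj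
    have hdvd : n ∣ x.1.val * y.1.val := by
      rcases hmul with h | h
      · exact (key _ _).mp h
      · rw [Nat.mul_comm]; exact (key _ _).mp h
    apply hd2
    obtain ⟨m, hm⟩ := hdn
    obtain ⟨a, ha⟩ : d ∣ x.1.val := hx ▸ Nat.gcd_dvd_left _ _
    have hcop : Nat.Coprime a m := by
      have hg := Nat.gcd_mul_left d a m
      rw [← ha, ← hm, hx] at hg
      exact (Nat.mul_eq_left hd0.ne').mp hg.symm
    have hm_dvd : m ∣ y.1.val := by
      have h1' : d * m ∣ d * (a * y.1.val) := by
        rw [← mul_assoc, ← ha, ← hm]; exact hdvd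
      have h2' : m ∣ a * y.1.val := (Nat.mul_dvd_mul_iff_left hd0).mp h1'
      exact hcop.symm.dvd_of_dvd_mul_left h2'
    have hmd : m ∣ d := by
      have h2' : m ∣ Nat.gcd y.1.val n := Nat.dvd_gcd hm_dvd ⟨d, by rw [hm, mul_comm]⟩
      rwa [hy] at h2'
    rw [hm, pow_two]
    exact Nat.mul_dvd_mul_left d hmd
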